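/- arXiv:1703.01142 — 3 statements merged into one kernel-verified Lean document; each statement's English description precedes it below -/
import Mathlib

section
/- Let G be a simple connected graph on n vertices with symmetric normalized Laplacian 𝓛, and define the Rényi-2 entropy H₂(G) = -log(Tr((𝓛/n)²)). Then H₂(G) ≥ log(n² / (n + Σ_i 1/√(d_i))). -/
open Real BigOperators Finset Matrix SimpleGraph

noncomputable def nLap {V : Type*} [Fintype V] [DecidableEq V]
    (G : SimpleGraph V) [DecidableRel G.Adj] : Matrix V V ℝ :=
  Matrix.diagonal (fun v => 1 / Real.sqrt (G.degree v : ℝ)) *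
    (Matrix.diagonal (fun v => (G.degree v : ℝ)) - G.adjMatrix ℝ) *
    Matrix.diagonal (fun v => 1 / Real.sqrt (G.degree v : ℝ))

lemma nLap_apply {V : Type*} [Fintype V] [DecidableEq V] (G : SimpleGraph V)
    [DecidableRel G.Adj] (i j : V) :
    nLap G i j = (1 / Real.sqrt (G.degree i : ℝ)) *
      ((if i = j then (G.degree i : ℝ) else 0) - (if G.Adj i j then 1 else 0)) *
      (1 / Real.sqrt (G.degree j : ℝ)) := by
  simp [nLap, Matrix.mul_apply, Matrix.diagonal_apply, Finset.sum_ite_eq, Finset.sum_ite_eq',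
    Matrix.sub_apply, SimpleGraph.adjMatrix_apply, mul_sub, sub_mul]
  rw [Finset.sum_eq_single i]
  · simp [adj_comm]
  · intro b _ hb; simp [hb.symm]
  · simp

lemma amgm_aux (x y : ℝ) (hx : 0 < x) (hy : 0 < y) :
    1 / (x * y) ≤ (1 / x ^ 2 + 1 / y ^ 2) / 2 := by
  rw [div_add_div _ _ (by positivity) (by positivity), div_div,
    div_le_div_iff₀ (by positivity) (by positivity)]
  nlinarith [mul_nonneg (sq_nonneg (x - y)) (mul_pos hx hy).le]

/-- Lower bound on the Rényi-2 entropy H₂(G) = -log Tr((𝓛/n)²) for a connected graph. -/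
theorem stmt_6 (n : ℕ) (G : SimpleGraph (Fin n)) [DecidableRel G.Adj]
    (hconn : G.Connected) :
    -Real.log (Matrix.trace ((((n : ℝ)⁻¹) • nLap G) * (((n : ℝ)⁻¹) • nLap G))) ≥
      Real.log ((n : ℝ) ^ 2 / ((n : ℝ) + ∑ i, 1 / Real.sqrt (G.degree i : ℝ))) := by
  classical
  have hne : Nonempty (Fin n) := hconn.nonempty
  have hn0 : 0 < n := Fin.pos_iff_nonempty.mpr hne
  rcases eq_or_lt_of_le (show 1 ≤ n from hn0) with h1 | h2
  · -- n = 1 : the single vertex has degree 0 and everything vanishes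
    have hn1 : n = 1 := h1.symm
    subst hn1
    have hdeg0 : ∀ v : Fin 1, G.degree v = 0 := by
      intro v
      rw [SimpleGraph.degree, Finset.card_eq_zero, Finset.eq_empty_iff_forall_notMem]
      intro w hw
      rw [SimpleGraph.mem_neighborFinset] at hw
      exact hw.ne (Subsingleton.elim v w)
    have hz : nLap G = 0 := by
      ext i j
      rw [nLap_apply]
      simp [hdeg0]
    rw [hz]
    simp [hdeg0]
  · -- n ≥ 2 : every vertex has positive degree
    have hd1 : ∀ v : Fin n, (1 : ℝ) ≤ (G.degree v : ℝ) := by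
      intro v
      have : 0 < G.degree v := by
        rw [G.degree_pos_iff_exists_adj v]
        obtain ⟨w, hw⟩ : ∃ w : Fin n, w ≠ v :=
          Fintype.exists_ne_of_one_lt_card (by simpa using h2) v
        obtain ⟨p⟩ := hconn.preconnected v w
        cases p with
        | nil => exact absurd rfl hw
        | cons h _ => exact ⟨_, h⟩
      exact_mod_cast this
    have hdpos : ∀ v : Fin n, (0 : ℝ) < (G.degree v : ℝ) :=
      fun v => lt_of_lt_of_le zero_lt_one (hd1 v)
    set S : ℝ := ∑ i, ∑ j, (if G.Adj i j then (1 : ℝ) else 0) /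
      ((G.degree i : ℝ) * (G.degree j : ℝ)) with hSdef
    have key : ∀ i : Fin n, (1 / Real.sqrt (G.degree i : ℝ)) *
        (1 / Real.sqrt (G.degree i : ℝ)) = 1 / (G.degree i : ℝ) := by
      intro i
      rw [div_mul_div_comm, one_mul, Real.mul_self_sqrt (hdpos i).le]
    -- trace computation
    have htr : Matrix.trace (nLap G * nLap G) = (n : ℝ) + S := by
      have hterm : ∀ i j : Fin n, nLap G i j * nLap G j i
          = (if i = j then (1 : ℝ) else 0) + (if G.Adj i j then (1 : ℝ) else 0) /
            ((G.degree i : ℝ) * (G.degree j : ℝ)) := by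
        intro i j
        rw [nLap_apply, nLap_apply]
        by_cases hij : i = j
        · subst hij
          simp only [eq_self_iff_true, if_true, SimpleGraph.irrefl, if_false, sub_zero]
          have h1 : (1 / Real.sqrt (G.degree i : ℝ)) * (G.degree i : ℝ) *
              (1 / Real.sqrt (G.degree i : ℝ)) = 1 := by
            rw [mul_comm (1 / Real.sqrt (G.degree i : ℝ)) ((G.degree i : ℝ)), mul_assoc,
              key i, mul_one_div, div_self (hdpos i).ne']
          rw [h1]
          simp
        · by_cases ha : G.Adj i j
          · simp only [if_neg hij, if_neg (Ne.symm hij), if_pos ha, if_pos ha.symm, zero_sub]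
            have h1 : (1 / Real.sqrt (G.degree i : ℝ) * -1 * (1 / Real.sqrt (G.degree j : ℝ))) *
                (1 / Real.sqrt (G.degree j : ℝ) * -1 * (1 / Real.sqrt (G.degree i : ℝ)))
                = ((1 / Real.sqrt (G.degree i : ℝ)) * (1 / Real.sqrt (G.degree i : ℝ))) *
                  ((1 / Real.sqrt (G.degree j : ℝ)) * (1 / Real.sqrt (G.degree j : ℝ))) := by
              ring
            rw [h1, key i, key j, div_mul_div_comm, one_mul, zero_add]
          · simp [hij, Ne.symm hij, ha, fun h => ha (G.adj_symm h)]
      rw [Matrix.trace]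
      simp only [Matrix.diag_apply, Matrix.mul_apply]
      rw [Finset.sum_congr rfl fun i _ => Finset.sum_congr rfl fun j _ => hterm i j]
      simp only [Finset.sum_add_distrib]
      rw [hSdef]
      congr 1
      simp
    -- bound S
    have hS_le : S ≤ ∑ i, 1 / Real.sqrt (G.degree i : ℝ) := by
      have hdeg : ∀ i : Fin n, ∑ j, (if G.Adj i j then (1 : ℝ) else 0) = (G.degree i : ℝ) := by
        intro i
        rw [Finset.sum_boole]
        congr 1
        rw [SimpleGraph.degree, SimpleGraph.neighborFinset_eq_filter]
      have h1 : S ≤ ∑ i, ∑ j, (if G.Adj i j then (1 : ℝ) else 0) *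
          ((1 / (G.degree i : ℝ) ^ 2 + 1 / (G.degree j : ℝ) ^ 2) / 2) := by
        rw [hSdef]
        refine Finset.sum_le_sum fun i _ => Finset.sum_le_sum fun j _ => ?_
        by_cases ha : G.Adj i j
        · simp only [if_pos ha, one_mul]
          exact amgm_aux _ _ (hdpos i) (hdpos j)
        · simp [ha]
      have h2 : (∑ i, ∑ j, (if G.Adj i j then (1 : ℝ) else 0) *
          ((1 / (G.degree i : ℝ) ^ 2 + 1 / (G.degree j : ℝ) ^ 2) / 2))
          = ∑ i, ∑ j, (if G.Adj i j then (1 : ℝ) else 0) * (1 / (G.degree i : ℝ) ^ 2) := by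
        have hswap : (∑ i, ∑ j, (if G.Adj i j then (1 : ℝ) else 0) * (1 / (G.degree j : ℝ) ^ 2))
            = ∑ i, ∑ j, (if G.Adj i j then (1 : ℝ) else 0) * (1 / (G.degree i : ℝ) ^ 2) := by
          rw [Finset.sum_comm]
          refine Finset.sum_congr rfl fun i _ => Finset.sum_congr rfl fun j _ => ?_
          by_cases ha : G.Adj i j
          · simp [ha, ha.symm]
          · have ha' : ¬G.Adj j i := fun h => ha (G.adj_symm h)
            simp [ha, ha']
        calc (∑ i, ∑ j, (if G.Adj i j then (1 : ℝ) else 0) *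
              ((1 / (G.degree i : ℝ) ^ 2 + 1 / (G.degree j : ℝ) ^ 2) / 2))
            = ((∑ i, ∑ j, (if G.Adj i j then (1 : ℝ) else 0) * (1 / (G.degree i : ℝ) ^ 2))
              + ∑ i, ∑ j, (if G.Adj i j then (1 : ℝ) else 0) * (1 / (G.degree j : ℝ) ^ 2)) / 2 := by
              rw [← Finset.sum_add_distrib]
              rw [Finset.sum_div]
              refine Finset.sum_congr rfl fun i _ => ?_
              rw [← Finset.sum_add_distrib, Finset.sum_div]
              refine Finset.sum_congr rfl fun j _ => ?_
              ring
          _ = _ := by rw [hswap]; ring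
      have h3 : (∑ i, ∑ j, (if G.Adj i j then (1 : ℝ) else 0) * (1 / (G.degree i : ℝ) ^ 2))
          = ∑ i, 1 / (G.degree i : ℝ) := by
        refine Finset.sum_congr rfl fun i _ => ?_
        rw [← Finset.sum_mul, hdeg i]
        have := (hdpos i).ne'
        field_simp
      have h4 : (∑ i, 1 / (G.degree i : ℝ)) ≤ ∑ i, 1 / Real.sqrt (G.degree i : ℝ) := by
        refine Finset.sum_le_sum fun i _ => ?_
        apply one_div_le_one_div_of_le (Real.sqrt_pos.mpr (hdpos i))
        rw [Real.sqrt_le_left (hdpos i).le]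
        nlinarith [hd1 i]
      calc S ≤ _ := h1
        _ = _ := h2
        _ = _ := h3
        _ ≤ _ := h4
    have hS0 : 0 ≤ S := by
      rw [hSdef]
      refine Finset.sum_nonneg fun i _ => Finset.sum_nonneg fun j _ => ?_
      positivity
    have hnR : (0 : ℝ) < n := by exact_mod_cast hn0
    have hT : (0 : ℝ) < (n : ℝ) + S := by linarith
    have htrace : Matrix.trace ((((n : ℝ)⁻¹) • nLap G) * (((n : ℝ)⁻¹) • nLap G))
        = ((n : ℝ) + S) / (n : ℝ) ^ 2 := by
      rw [smul_mul_assoc, mul_smul_comm, Matrix.trace_smul, Matrix.trace_smul, htr,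
        smul_eq_mul, smul_eq_mul]
      rw [div_eq_mul_inv, pow_two, mul_inv]
      ring
    rw [ge_iff_le, htrace, ← Real.log_inv, inv_div]
    have hSig0 : 0 ≤ ∑ i, 1 / Real.sqrt (G.degree i : ℝ) := by
      refine Finset.sum_nonneg fun i _ => ?_
      positivity
    apply Real.log_le_log (div_pos (pow_pos hnR 2) (by linarith))
    have h5 : (n : ℝ) + S ≤ (n : ℝ) + ∑ i, 1 / Real.sqrt (G.degree i : ℝ) := by linarith
    exact div_le_div_of_nonneg_left (by positivity) hT h5
end

section
/- Among all simple connected graphs G on n vertices, the complete graph K_n maximizes the Rényi-p entropy of the normalized symmetric Laplacian for every p > 1: H_p(G) ≤ H_p(K_n) = log(n-1). -/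
open Real BigOperators Finset Matrix SimpleGraph

lemma sqrt_aux (a : ℝ) (ha : 0 < a) (x : ℝ) : 1/Real.sqrt a * x * (1/Real.sqrt a) = x / a := by
  rw [div_mul_eq_mul_div, one_mul, mul_one_div, div_div, Real.mul_self_sqrt ha.le]

lemma nLap_diag {V : Type*} [Fintype V] [DecidableEq V]
    (G : SimpleGraph V) [DecidableRel G.Adj] (v : V) (hd : 0 < G.degree v) :
    nLap G v v = 1 := by
  have h0 : (0:ℝ) < (G.degree v : ℝ) := by exact_mod_cast hd
  rw [nLap_apply, if_pos rfl, if_neg (SimpleGraph.irrefl _), sub_zero, sqrt_aux _ h0,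
    div_self h0.ne']

lemma nLap_top_eq (n : ℕ) (hn : 2 ≤ n) :
    nLap (⊤ : SimpleGraph (Fin n)) =
      ((n:ℝ) - 1)⁻¹ • (((n:ℝ)) • (1 : Matrix (Fin n) (Fin n) ℝ) -
        (Matrix.of (fun _ _ => (1:ℝ)))) := by
  have hb : (0:ℝ) < (n:ℝ) - 1 := by
    have : (2:ℝ) ≤ (n:ℝ) := by exact_mod_cast hn
    linarith
  have hdeg : ∀ v : Fin n, ((⊤ : SimpleGraph (Fin n)).degree v : ℝ) = (n:ℝ) - 1 := by
    intro v
    rw [SimpleGraph.complete_graph_degree, Fintype.card_fin, Nat.cast_sub (by omega)]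
    simp
  ext i j
  rw [nLap_apply]
  simp only [hdeg]
  by_cases h : i = j
  · subst h
    rw [if_pos rfl, if_neg (SimpleGraph.irrefl _), sub_zero, sqrt_aux _ hb,
      div_self hb.ne']
    simp only [Matrix.smul_apply, Matrix.sub_apply, Matrix.smul_apply, Matrix.one_apply_eq,
      Matrix.of_apply, smul_eq_mul, mul_one]
    field_simp
  · rw [if_neg h, if_pos (by simpa using h), zero_sub, sqrt_aux _ hb]
    simp only [Matrix.smul_apply, Matrix.sub_apply, Matrix.smul_apply,
      Matrix.one_apply_ne h, Matrix.of_apply, smul_eq_mul, mul_zero]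
    field_simp
    ring

lemma trace_eq_sum_eig {m : Type*} [Fintype m] [DecidableEq m]
    {A : Matrix m m ℝ} (hA : A.IsHermitian) : A.trace = ∑ i, hA.eigenvalues i := by
  conv_lhs => rw [hA.spectral_theorem]
  rw [Unitary.conjStarAlgAut_apply, Matrix.trace_mul_cycle,
    (Unitary.mem_iff.mp (hA.eigenvectorUnitary).2).1, Matrix.one_mul, Matrix.trace_diagonal]
  simp

lemma eig_quad {m : Type*} [Fintype m] [DecidableEq m]
    {A : Matrix m m ℝ} (hA : A.IsHermitian) (c : ℝ) (hsq : A * A = c • A) (i : m) :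
    hA.eigenvalues i = 0 ∨ hA.eigenvalues i = c := by
  set μ := hA.eigenvalues i with hμ
  have hv := hA.mulVec_eigenvectorBasis i
  have h2 : (A * A) *ᵥ ⇑(hA.eigenvectorBasis i) = (μ * μ) • ⇑(hA.eigenvectorBasis i) := by
    rw [← Matrix.mulVec_mulVec, hv, Matrix.mulVec_smul, hv, smul_smul]
  have h3 : (c • A) *ᵥ ⇑(hA.eigenvectorBasis i) = (c * μ) • ⇑(hA.eigenvectorBasis i) := by
    rw [Matrix.smul_mulVec, hv, smul_smul]
  rw [hsq, h3] at h2
  have h0 : (c * μ - μ * μ) • ⇑(hA.eigenvectorBasis i) = 0 := by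
    rw [sub_smul, h2, sub_self]
  rcases smul_eq_zero.mp h0 with h | h
  · have : μ * (c - μ) = 0 := by ring_nf; ring_nf at h; linarith
    rcases mul_eq_zero.mp this with h' | h'
    · exact Or.inl h'
    · exact Or.inr (by linarith [sub_eq_zero.mp h'])
  · exact absurd (by ext x; exact congrFun h x) (hA.eigenvectorBasis.orthonormal.ne_zero i)

lemma key_sq (n : ℕ) (J : Matrix (Fin n) (Fin n) ℝ) (hJ : J = Matrix.of fun _ _ => (1:ℝ)) :
    ((n:ℝ) • (1 : Matrix (Fin n) (Fin n) ℝ) - J) * ((n:ℝ) • 1 - J)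
      = (n:ℝ) • ((n:ℝ) • (1 : Matrix (Fin n) (Fin n) ℝ) - J) := by
  have hJJ : J * J = (n:ℝ) • J := by
    subst hJ; ext i j; simp [Matrix.mul_apply]
  rw [sub_mul, mul_sub, mul_sub, hJJ]
  simp only [Matrix.smul_mul, Matrix.mul_smul, Matrix.one_mul, Matrix.mul_one, smul_smul]
  rw [smul_sub, smul_smul]
  abel

lemma two_valued_sum_rpow {n : ℕ} (x : Fin n → ℝ) (c : ℝ) (hc : 0 < c)
    (h : ∀ i, x i = 0 ∨ x i = c) (hsum : ∑ i, x i = 1) (p : ℝ) (hp : 0 < p) :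
    ∑ i, x i ^ p = c⁻¹ * c ^ p := by
  classical
  set s : Finset (Fin n) := Finset.univ.filter (fun i => x i = c) with hs
  have h1 : ∑ i, x i = (s.card : ℝ) * c := by
    rw [← Finset.sum_filter_add_sum_filter_not Finset.univ (fun i => x i = c)]
    rw [Finset.sum_congr rfl (fun i hi => (Finset.mem_filter.mp hi).2),
      Finset.sum_const, nsmul_eq_mul]
    have : ∑ i ∈ Finset.univ.filter (fun i => ¬ x i = c), x i = 0 := by
      apply Finset.sum_eq_zero
      intro i hi
      rcases h i with h' | h'
      · exact h'
      · exact absurd h' (Finset.mem_filter.mp hi).2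
    rw [this, add_zero]
  have hcard : (s.card : ℝ) = c⁻¹ := by
    rw [hsum] at h1
    field_simp at h1 ⊢
    linarith
  have h2 : ∑ i, x i ^ p = (s.card : ℝ) * c ^ p := by
    rw [← Finset.sum_filter_add_sum_filter_not Finset.univ (fun i => x i = c)]
    rw [Finset.sum_congr rfl (fun i hi => by rw [(Finset.mem_filter.mp hi).2]),
      Finset.sum_const, nsmul_eq_mul]
    have : ∑ i ∈ Finset.univ.filter (fun i => ¬ x i = c), x i ^ p = 0 := by
      apply Finset.sum_eq_zero
      intro i hi
      rcases h i with h' | h'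
      · rw [h', Real.zero_rpow hp.ne']
      · exact absurd h' (Finset.mem_filter.mp hi).2
    rw [this, add_zero]
  rw [h2, hcard]

lemma jensen_bound {n : ℕ} (hn : 2 ≤ n) (x : Fin n → ℝ) (hx : ∀ i, 0 ≤ x i)
    (hsum : ∑ i, x i = 1) (j : Fin n) (hj : x j = 0) (p : ℝ) (hp : 1 < p) :
    ((n:ℝ) - 1) ^ (1 - p) ≤ ∑ i, x i ^ p := by
  classical
  set b : ℝ := (n:ℝ) - 1 with hbdef
  have hb : 0 < b := by
    have : (2:ℝ) ≤ (n:ℝ) := by exact_mod_cast hn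
    simp only [hbdef]; linarith
  set s : Finset (Fin n) := Finset.univ.erase j with hs
  have hcard : (s.card : ℝ) = b := by
    rw [hs, Finset.card_erase_of_mem (Finset.mem_univ j), Finset.card_univ, Fintype.card_fin]
    rw [Nat.cast_sub (by omega)]
    simp [hbdef]
  have hsums : ∑ i ∈ s, x i = 1 := by
    have := Finset.sum_erase_add Finset.univ x (Finset.mem_univ j)
    rw [hj, add_zero] at this
    rw [hs, this, hsum]
  have hjen := Real.rpow_arith_mean_le_arith_mean_rpow s (fun _ => b⁻¹) x
    (fun i _ => by positivity) (by
      rw [Finset.sum_const, nsmul_eq_mul, hcard, mul_inv_cancel₀ hb.ne'])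
    (fun i _ => hx i) hp.le
  rw [← Finset.mul_sum, hsums, mul_one, ← Finset.mul_sum] at hjen
  have h1 : b ^ (1 - p) ≤ ∑ i ∈ s, x i ^ p := by
    have := mul_le_mul_of_nonneg_left hjen hb.le
    rw [← mul_assoc, mul_inv_cancel₀ hb.ne', one_mul] at this
    calc b ^ (1 - p) = b * b⁻¹ ^ p := by
          rw [Real.inv_rpow hb.le, Real.rpow_sub hb, Real.rpow_one, div_eq_mul_inv]
      _ ≤ _ := this
  have h2 : ∑ i ∈ s, x i ^ p ≤ ∑ i, x i ^ p := by
    apply Finset.sum_le_sum_of_subset_of_nonneg (Finset.subset_univ s)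
    intro i _ _
    exact Real.rpow_nonneg (hx i) p
  linarith

/-- The complete graph maximizes the Rényi-p entropy (p > 1) of the normalized
symmetric Laplacian among connected graphs: H_p(G) ≤ H_p(K_n) = log(n-1). -/
theorem stmt_12 (n : ℕ) (hn : 2 ≤ n) (p : ℝ) (hp : 1 < p)
    (G : SimpleGraph (Fin n)) [DecidableRel G.Adj] (hconn : G.Connected)
    (hG : (((n : ℝ)⁻¹) • nLap G).IsHermitian)
    (hK : (((n : ℝ)⁻¹) • nLap (⊤ : SimpleGraph (Fin n))).IsHermitian) :
    (1 / (1 - p)) * Real.log (∑ i, hG.eigenvalues i ^ p) ≤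
      (1 / (1 - p)) * Real.log (∑ i, hK.eigenvalues i ^ p) ∧
    (1 / (1 - p)) * Real.log (∑ i, hK.eigenvalues i ^ p) = Real.log ((n : ℝ) - 1) := by
  classical
  have hnR : (0:ℝ) < (n:ℝ) := by exact_mod_cast Nat.lt_of_lt_of_le Nat.zero_lt_two hn
  have hb : (0:ℝ) < (n:ℝ) - 1 := by
    have : (2:ℝ) ≤ (n:ℝ) := by exact_mod_cast hn
    linarith
  have h1p : (1:ℝ) - p < 0 := by linarith
  -- K part
  have hsqK : (((n:ℝ)⁻¹) • nLap (⊤ : SimpleGraph (Fin n))) *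
      (((n:ℝ)⁻¹) • nLap (⊤ : SimpleGraph (Fin n)))
      = ((n:ℝ) - 1)⁻¹ • (((n:ℝ)⁻¹) • nLap (⊤ : SimpleGraph (Fin n))) := by
    rw [nLap_top_eq n hn]
    simp only [smul_smul]
    rw [Matrix.smul_mul, Matrix.mul_smul, smul_smul, key_sq n _ rfl, smul_smul]
    congr 1
    field_simp
  have hKdi := eig_quad hK (((n:ℝ) - 1)⁻¹) hsqK
  have hdegK : ∀ v : Fin n, 0 < (⊤ : SimpleGraph (Fin n)).degree v := by
    intro v
    rw [SimpleGraph.complete_graph_degree, Fintype.card_fin]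
    omega
  have hKtr : ∑ i, hK.eigenvalues i = 1 := by
    rw [← trace_eq_sum_eig hK, Matrix.trace_smul]
    have htr : (nLap (⊤ : SimpleGraph (Fin n))).trace = (n:ℝ) := by
      rw [Matrix.trace]
      simp only [Matrix.diag_apply]
      rw [Finset.sum_congr rfl (fun v _ => nLap_diag _ v (hdegK v))]
      simp
    rw [htr, smul_eq_mul, inv_mul_cancel₀ hnR.ne']
  have hKsum : ∑ i, hK.eigenvalues i ^ p = ((n:ℝ) - 1) ^ (1 - p) := by
    rw [two_valued_sum_rpow _ (((n:ℝ) - 1)⁻¹) (by positivity) hKdi hKtr p (by linarith)]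
    rw [inv_inv, Real.inv_rpow hb.le, Real.rpow_sub hb, Real.rpow_one, div_eq_mul_inv]
  have hsecond : (1 / (1 - p)) * Real.log (∑ i, hK.eigenvalues i ^ p)
      = Real.log ((n : ℝ) - 1) := by
    rw [hKsum, Real.log_rpow hb, one_div, inv_mul_cancel_left₀ h1p.ne]
  refine ⟨?_, hsecond⟩
  -- G part
  have hdpos : ∀ v : Fin n, 0 < G.degree v := by
    intro v
    rw [G.degree_pos_iff_exists_adj]
    obtain ⟨u, hu⟩ := Fintype.exists_ne_of_one_lt_card (by simp; omega) v
    obtain ⟨w⟩ := hconn.preconnected v u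
    cases w with
    | nil => exact absurd rfl hu
    | cons h _ => exact ⟨_, h⟩
  have hdposR : ∀ v : Fin n, (0:ℝ) < (G.degree v : ℝ) := fun v => by exact_mod_cast hdpos v
  set D : Matrix (Fin n) (Fin n) ℝ :=
    Matrix.diagonal (fun v => 1 / Real.sqrt (G.degree v : ℝ)) with hD
  have hDH : Dᴴ = D := by
    rw [hD, Matrix.diagonal_conjTranspose]
    congr
  have hnl : nLap G = D * G.lapMatrix ℝ * D := rfl
  have hpsdn : (nLap G).PosSemidef := by
    have h2 := (SimpleGraph.posSemidef_lapMatrix ℝ G).mul_mul_conjTranspose_same D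
    rw [hDH] at h2
    rw [hnl]
    exact h2
  have hρpsd : ((((n:ℝ)⁻¹) • nLap G)).PosSemidef := by
    refine ⟨hG, fun x => ?_⟩
    exact (hpsdn.smul (inv_nonneg.mpr hnR.le)).2 x
  have hGnn : ∀ i, 0 ≤ hG.eigenvalues i := fun i => hρpsd.eigenvalues_nonneg i
  have hGtr : ∑ i, hG.eigenvalues i = 1 := by
    rw [← trace_eq_sum_eig hG, Matrix.trace_smul]
    have htr : (nLap G).trace = (n:ℝ) := by
      rw [Matrix.trace]
      simp only [Matrix.diag_apply]
      rw [Finset.sum_congr rfl (fun v _ => nLap_diag _ v (hdpos v))]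
      simp
    rw [htr, smul_eq_mul, inv_mul_cancel₀ hnR.ne']
  have hvec : nLap G *ᵥ (fun v => Real.sqrt (G.degree v : ℝ)) = 0 := by
    rw [hnl, ← Matrix.mulVec_mulVec, ← Matrix.mulVec_mulVec]
    have hDv : D *ᵥ (fun v => Real.sqrt (G.degree v : ℝ)) = fun _ => 1 := by
      ext v
      rw [hD, Matrix.mulVec_diagonal]
      have hs : Real.sqrt (G.degree v : ℝ) ≠ 0 := (Real.sqrt_pos.mpr (hdposR v)).ne'
      field_simp
    rw [hDv, G.lapMatrix_mulVec_const_eq_zero, Matrix.mulVec_zero]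
  have hdet : ((((n:ℝ)⁻¹) • nLap G)).det = 0 := by
    rw [Matrix.det_smul]
    have hd0 : (nLap G).det = 0 := by
      rw [← Matrix.exists_mulVec_eq_zero_iff]
      refine ⟨_, ?_, hvec⟩
      intro h0
      exact (Real.sqrt_pos.mpr (hdposR ⟨0, by omega⟩)).ne' (congrFun h0 ⟨0, by omega⟩)
    rw [hd0, mul_zero]
  have hprod : ∏ i, hG.eigenvalues i = 0 := by
    have hh := hG.det_eq_prod_eigenvalues
    rw [hdet] at hh
    exact_mod_cast hh.symm
  obtain ⟨j, -, hj⟩ := Finset.prod_eq_zero_iff.mp hprod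
  have hGe := jensen_bound hn _ hGnn hGtr j hj p hp
  have hlog : Real.log (∑ i, hK.eigenvalues i ^ p) ≤
      Real.log (∑ i, hG.eigenvalues i ^ p) := by
    rw [hKsum]
    exact Real.log_le_log (Real.rpow_pos_of_pos hb _) hGe
  exact mul_le_mul_of_nonpos_left hlog
    (le_of_lt (div_neg_of_pos_of_neg one_pos h1p))
end

section
/- Let G be a simple connected graph on n vertices. Then the Von Neumann entropy and the Rényi-2 entropy of ρ = 𝓛/n satisfy 0 ≤ H(G) - H₂(G) ≤ (1/2) log 2. -/
open Real BigOperators Finset Matrix SimpleGraph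

section Aux

lemma log_ge_tangent {x γ : ℝ} (hx : 0 < x) (hγ : 0 < γ) : 1 + Real.log γ - γ / x ≤ Real.log x := by
  have h := Real.log_le_sub_one_of_pos (show 0 < γ / x by positivity)
  rw [Real.log_div (ne_of_gt hγ) (ne_of_gt hx)] at h
  linarith

noncomputable def Faux : ℝ → ℝ := fun x => Real.log x - x/2 + (Real.log 2 - 1/2) + 3/(8*x)

lemma Faux_hasDeriv {x : ℝ} (hx : x ≠ 0) :
    HasDerivAt Faux (-(2*x-1)*(2*x-3)/(8*x^2)) x := by
  have h1 : HasDerivAt Real.log (1/x) x := by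
    simpa [one_div] using Real.hasDerivAt_log hx
  have h2 : HasDerivAt (fun x : ℝ => x/2) (1/2) x := by
    simpa using (hasDerivAt_id x).div_const 2
  have h3 : HasDerivAt (fun x : ℝ => 3/(8*x)) (-3/(8*x^2)) x := by
    have h4 : HasDerivAt (fun x:ℝ => 8*x) 8 x := by simpa using (hasDerivAt_id x).const_mul (8:ℝ)
    have h5 := (h4.inv (by simpa using hx)).const_mul (3:ℝ)
    convert h5 using 1 <;> [rfl; rfl; (funext y; simp [div_eq_mul_inv]); ring_nf]
  have h6 := ((h1.sub h2).add_const (Real.log 2 - 1/2)).add h3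
  convert h6 using 1 <;> [rfl; rfl; rfl; skip]
  field_simp
  ring

lemma Faux_nonneg {x : ℝ} (hx : 0 < x) (hx2 : x ≤ 2) : 0 ≤ Faux x := by
  have hcont : ∀ s : Set ℝ, (0:ℝ) ∉ s → ContinuousOn Faux s := by
    intro s hs x hxs
    exact (Faux_hasDeriv (fun h => hs (h ▸ hxs))).continuousAt.continuousWithinAt
  have hderiv : ∀ y : ℝ, y ≠ 0 → deriv Faux y = -(2*y-1)*(2*y-3)/(8*y^2) :=
    fun y hy => (Faux_hasDeriv hy).deriv
  have hdiff : ∀ s : Set ℝ, (0:ℝ) ∉ s → DifferentiableOn ℝ Faux s := by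
    intro s hs y hys
    exact (Faux_hasDeriv (fun h => hs (h ▸ hys))).differentiableAt.differentiableWithinAt
  have hF12 : Faux (1/2) = 0 := by
    unfold Faux
    rw [one_div, Real.log_inv]
    ring
  have hF2 : 0 ≤ Faux 2 := by
    unfold Faux
    have := Real.log_two_gt_d9
    norm_num
    nlinarith
  rcases le_or_gt x (1/2) with h1 | h1
  · -- antitone on Ioc 0 (1/2)
    have hanti : AntitoneOn Faux (Set.Ioc 0 (1/2)) := by
      apply antitoneOn_of_deriv_nonpos (convex_Ioc _ _)
        (hcont _ (by simp)) (by
          rw [interior_Ioc]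
          exact hdiff _ (by simp))
      intro y hy
      rw [interior_Ioc] at hy
      obtain ⟨hy0, hy1⟩ := hy
      rw [hderiv y (ne_of_gt hy0)]
      apply div_nonpos_of_nonpos_of_nonneg
      · nlinarith
      · positivity
    have := hanti ⟨hx, h1⟩ ⟨(by norm_num : (0:ℝ) < 1/2), le_refl _⟩ h1
    rw [hF12] at this; exact this
  · rcases le_or_gt x (3/2) with h3 | h3
    · have hmono : MonotoneOn Faux (Set.Icc (1/2 : ℝ) (3/2)) := by
        apply monotoneOn_of_deriv_nonneg (convex_Icc _ _)
          (hcont _ (by norm_num)) (by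
            rw [interior_Icc]
            exact hdiff _ (by norm_num))
        intro y hy
        rw [interior_Icc] at hy
        obtain ⟨hy0, hy1⟩ := hy
        rw [hderiv y (by linarith : y ≠ (0:ℝ))]
        apply div_nonneg
        · nlinarith
        · positivity
      have := hmono ⟨le_refl _, by norm_num⟩ ⟨h1.le, h3⟩ h1.le
      rw [hF12] at this; exact this
    · have hanti : AntitoneOn Faux (Set.Icc (3/2 : ℝ) 2) := by
        apply antitoneOn_of_deriv_nonpos (convex_Icc _ _)
          (hcont _ (by norm_num)) (by
            rw [interior_Icc]
            exact hdiff _ (by norm_num))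
        intro y hy
        rw [interior_Icc] at hy
        obtain ⟨hy0, hy1⟩ := hy
        rw [hderiv y (by linarith : y ≠ (0:ℝ))]
        apply div_nonpos_of_nonpos_of_nonneg
        · nlinarith
        · positivity
      have := hanti ⟨le_of_lt h3, hx2⟩ ⟨(by norm_num : (3/2:ℝ) ≤ 2), le_refl _⟩ hx2
      exact le_trans hF2 this

lemma key_ineq {x : ℝ} (h0 : 0 ≤ x) (h2 : x ≤ 2) :
    x^2/2 - x * Real.log x ≤ 3/8 + (Real.log 2 - 1/2) * x := by
  rcases eq_or_lt_of_le h0 with h | h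
  · rw [← h]; norm_num
  · have hF := Faux_nonneg h h2
    have e : x * Faux x = x * Real.log x - x^2/2 + (Real.log 2 - 1/2)*x + 3/8 := by
      unfold Faux
      field_simp
    nlinarith [mul_nonneg h0 hF]

variable {m : Type*} [Fintype m] [DecidableEq m]

lemma my_trace_eq_sum_eig {A : Matrix m m ℝ} (hA : A.IsHermitian) :
    A.trace = ∑ i, hA.eigenvalues i := by
  conv_lhs => rw [hA.spectral_theorem]
  rw [Unitary.conjStarAlgAut_apply, Matrix.trace_mul_cycle]
  rw [show (star (hA.eigenvectorUnitary : Matrix m m ℝ)) * (hA.eigenvectorUnitary : Matrix m m ℝ)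
      = 1 from Unitary.coe_star_mul_self hA.eigenvectorUnitary]
  rw [one_mul, Matrix.trace_diagonal]
  simp

lemma my_trace_sq_eq_sum_eig_sq {A : Matrix m m ℝ} (hA : A.IsHermitian) :
    (A * A).trace = ∑ i, (hA.eigenvalues i)^2 := by
  set U := (hA.eigenvectorUnitary : Matrix m m ℝ)
  set D : Matrix m m ℝ := Matrix.diagonal (RCLike.ofReal ∘ hA.eigenvalues)
  have hsp : A = U * D * star U := hA.spectral_theorem
  have hU : star U * U = 1 := Unitary.coe_star_mul_self hA.eigenvectorUnitary
  have : A * A = U * (D * D) * star U := by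
    rw [hsp]
    calc U * D * star U * (U * D * star U) = U * D * (star U * U) * D * star U := by
          noncomm_ring
      _ = U * (D * D) * star U := by rw [hU]; noncomm_ring
  rw [this, Matrix.trace_mul_cycle, hU, one_mul]
  rw [show D * D = Matrix.diagonal (fun i => (hA.eigenvalues i)^2) by
    rw [Matrix.diagonal_mul_diagonal]
    congr 1
    funext i
    simp [sq]]
  rw [Matrix.trace_diagonal]

lemma my_eig_le_of_psd {A : Matrix m m ℝ} (hA : A.IsHermitian) (c : ℝ)
    (h : Matrix.PosSemidef (c • (1 : Matrix m m ℝ) - A)) (i : m) : hA.eigenvalues i ≤ c := by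
  set v : m → ℝ := ⇑(hA.eigenvectorBasis i) with hv
  have hmul : A *ᵥ v = hA.eigenvalues i • v := hA.mulVec_eigenvectorBasis i
  have hvne : v ≠ 0 := by
    have := hA.eigenvectorBasis.orthonormal.ne_zero i
    intro hcon
    apply this
    ext j
    exact congrFun hcon j
  have hvv : 0 < v ⬝ᵥ v := by
    have := Matrix.dotProduct_self_star_pos_iff (R := ℝ) (v := v)
    rw [star_trivial] at this
    exact this.mpr hvne
  have hpsd := h.dotProduct_mulVec_nonneg v
  rw [star_trivial] at hpsd
  rw [Matrix.sub_mulVec, Matrix.smul_mulVec, Matrix.one_mulVec, hmul] at hpsd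
  rw [dotProduct_sub, dotProduct_smul, dotProduct_smul] at hpsd
  simp only [smul_eq_mul] at hpsd
  nlinarith



lemma entropy_bounds {n : ℕ} (hn : 0 < n) (lam : Fin n → ℝ) (h0 : ∀ i, 0 ≤ lam i)
    (hsum : ∑ i, lam i = 1) (hub : ∀ i, lam i ≤ 2 / (n : ℝ)) {s : ℝ}
    (hs : s = ∑ i, (lam i)^2) :
    (∑ i, lam i * Real.log (lam i) ≤ Real.log s) ∧
      (Real.log s - ∑ i, lam i * Real.log (lam i) ≤ (1/2) * Real.log 2) := by
  set N : ℝ := (n : ℝ) with hN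
  have hNpos : 0 < N := by rw [hN]; exact_mod_cast hn
  have hs0 : 0 < s := by
    rcases (sum_nonneg (fun i _ => sq_nonneg (lam i))).lt_or_eq with h | h
    · rwa [hs]
    · exfalso
      have hz : ∀ i ∈ Finset.univ, (lam i)^2 = 0 :=
        (Finset.sum_eq_zero_iff_of_nonneg (fun i _ => sq_nonneg (lam i))).mp h.symm
      have : ∑ i, lam i = 0 := Finset.sum_eq_zero (fun i hi => pow_eq_zero_iff (n := 2) (by norm_num) |>.mp (hz i hi))
      rw [hsum] at this; norm_num at this
  set X : ℝ := ∑ i, lam i * Real.log (lam i) with hX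
  -- Part 1
  have part1 : X ≤ Real.log s := by
    have hper : ∀ i ∈ Finset.univ, lam i * Real.log (lam i) ≤
        (lam i)^2/s - lam i + lam i * Real.log s := by
      intro i _
      rcases (h0 i).lt_or_eq with h | h
      · have hd := Real.log_le_sub_one_of_pos (show 0 < lam i / s by positivity)
        rw [Real.log_div h.ne' hs0.ne'] at hd
        have := mul_le_mul_of_nonneg_left hd (h0 i)
        calc lam i * Real.log (lam i)
            = lam i * (Real.log (lam i) - Real.log s) + lam i * Real.log s := by ring
          _ ≤ lam i * (lam i / s - 1) + lam i * Real.log s := by nlinarith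
          _ = (lam i)^2/s - lam i + lam i * Real.log s := by ring
      · rw [← h]; simp
    have hsumle := Finset.sum_le_sum hper
    have hrhs : ∑ i, ((lam i)^2/s - lam i + lam i * Real.log s) = Real.log s := by
      rw [Finset.sum_add_distrib, Finset.sum_sub_distrib, ← Finset.sum_div, ← hs,
        div_self hs0.ne', hsum, ← Finset.sum_mul, hsum]
      ring
    rw [hrhs] at hsumle
    exact hsumle
  refine ⟨part1, ?_⟩
  -- Part 2
  have hxle : ∀ i, N * lam i ≤ 2 := by
    intro i
    have := hub i
    rw [div_eq_mul_inv] at this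
    calc N * lam i ≤ N * (2 * N⁻¹) := by
          apply mul_le_mul_of_nonneg_left _ hNpos.le
          exact this
      _ = 2 := by field_simp
  have hkey : ∀ i ∈ Finset.univ, (N * lam i)^2/2 - (N * lam i) * Real.log (N * lam i)
      ≤ 3/8 + (Real.log 2 - 1/2) * (N * lam i) :=
    fun i _ => key_ineq (mul_nonneg hNpos.le (h0 i)) (hxle i)
  have hA := Finset.sum_le_sum hkey
  have hlogper : ∀ i ∈ Finset.univ, (N * lam i) * Real.log (N * lam i)
      = N * (lam i * Real.log (lam i)) + (N * Real.log N) * lam i := by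
    intro i _
    rcases (h0 i).lt_or_eq with h | h
    · rw [Real.log_mul hNpos.ne' h.ne']; ring
    · rw [← h]; simp
  have hsum1 : ∑ i, ((N * lam i)^2/2 - (N * lam i) * Real.log (N * lam i))
      = N * (N * s / 2 - X - Real.log N) := by
    rw [Finset.sum_sub_distrib, Finset.sum_congr rfl hlogper, Finset.sum_add_distrib,
      ← Finset.mul_sum, ← Finset.mul_sum, hsum, ← hX]
    have : ∑ i, (N * lam i)^2/2 = N^2/2 * ∑ i, (lam i)^2 := by
      rw [Finset.mul_sum]
      exact Finset.sum_congr rfl (fun i _ => by ring)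
    rw [this, ← hs]
    ring
  have hsum2 : ∑ i, (3/8 + (Real.log 2 - 1/2) * (N * lam i))
      = N * (3/8 + (Real.log 2 - 1/2)) := by
    rw [Finset.sum_add_distrib, Finset.sum_const]
    have : ∑ i, (Real.log 2 - 1/2) * (N * lam i) = (Real.log 2 - 1/2) * N * ∑ i, lam i := by
      rw [Finset.mul_sum]
      exact Finset.sum_congr rfl (fun i _ => by ring)
    rw [this, hsum]
    simp [hN]
    ring
  rw [hsum1, hsum2] at hA
  have hA' : N * s / 2 - X - Real.log N ≤ 3/8 + (Real.log 2 - 1/2) :=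
    le_of_mul_le_mul_left (by linarith [hA]) hNpos
  have hB : Real.log s + Real.log N - Real.log 2 ≤ N * s / 2 - 1 := by
    have hd := Real.log_le_sub_one_of_pos (show 0 < N * s / 2 by positivity)
    have : Real.log (N * s / 2) = Real.log N + Real.log s - Real.log 2 := by
      rw [Real.log_div (by positivity) (by norm_num), Real.log_mul hNpos.ne' hs0.ne']
    linarith
  have hlog2 : Real.log 2 < 0.6931471808 := Real.log_two_lt_d9
  linarith



variable {V : Type*} [Fintype V] [DecidableEq V]

lemma degree_pos_of_connected {G : SimpleGraph V} [DecidableRel G.Adj]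
    (hconn : G.Connected) (hcard : 1 < Fintype.card V) (v : V) : 0 < G.degree v := by
  obtain ⟨w, hw⟩ := Fintype.exists_ne_of_one_lt_card hcard v
  rw [G.degree_pos_iff_exists_adj v]
  obtain ⟨p⟩ := hconn.preconnected v w
  cases p with
  | nil => exact absurd rfl hw.symm
  | cons h _ => exact ⟨_, h⟩

lemma posSemidef_signless (G : SimpleGraph V) [DecidableRel G.Adj] :
    Matrix.PosSemidef (G.degMatrix ℝ + G.adjMatrix ℝ) := by
  refine Matrix.PosSemidef.of_dotProduct_mulVec_nonneg ?_ ?_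
  · rw [Matrix.IsHermitian, Matrix.conjTranspose_eq_transpose_of_trivial, Matrix.IsSymm.eq]
    exact (isSymm_degMatrix (R := ℝ) (G := G)).add (isSymm_adjMatrix (α := ℝ) (G := G))
  · intro x
    rw [star_trivial]
    have e1 : x ⬝ᵥ ((G.degMatrix ℝ + G.adjMatrix ℝ) *ᵥ x)
        = ∑ i, ∑ j, (if G.Adj i j then x i * x i + x i * x j else 0) := by
      rw [Matrix.add_mulVec, dotProduct_add, dotProduct_mulVec_degMatrix,
        dotProduct_mulVec_adjMatrix, ← Finset.sum_add_distrib]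
      apply Finset.sum_congr rfl
      intro i _
      rw [degree_eq_sum_if_adj, Finset.sum_mul, Finset.sum_mul, ← Finset.sum_add_distrib]
      apply Finset.sum_congr rfl
      intro j _
      by_cases h : G.Adj i j <;> simp [h]
    have e2 : ∑ i, ∑ j, (if G.Adj i j then x i * x i + x i * x j else 0)
        = ∑ i, ∑ j, (if G.Adj i j then x j * x j + x i * x j else 0) := by
      rw [Finset.sum_comm]
      apply Finset.sum_congr rfl (fun i _ => Finset.sum_congr rfl (fun j _ => ?_))
      rw [if_congr (adj_comm G j i) rfl rfl]
      by_cases h : G.Adj i j <;> simp [h] <;> ring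
    have e3 : (0:ℝ) ≤ ∑ i, ∑ j, (if G.Adj i j then (x i + x j)^2 else 0) := by
      apply Finset.sum_nonneg (fun i _ => Finset.sum_nonneg (fun j _ => ?_))
      by_cases h : G.Adj i j <;> simp [h] <;> positivity
    have e4 : ∑ i, ∑ j, (if G.Adj i j then (x i + x j)^2 else 0)
        = ∑ i, ∑ j, (if G.Adj i j then x i * x i + x i * x j else 0)
          + ∑ i, ∑ j, (if G.Adj i j then x j * x j + x i * x j else 0) := by
      rw [← Finset.sum_add_distrib]
      apply Finset.sum_congr rfl (fun i _ => ?_)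
      rw [← Finset.sum_add_distrib]
      apply Finset.sum_congr rfl (fun j _ => ?_)
      by_cases h : G.Adj i j <;> simp [h] <;> ring
    rw [e1]
    nlinarith [e3, e4, e2]

variable {V : Type*} [Fintype V] [DecidableEq V]

section
variable (G : SimpleGraph V) [DecidableRel G.Adj]

lemma NDN_eq_one (hdeg : ∀ v, 0 < G.degree v) :
    Matrix.diagonal (fun v => 1 / Real.sqrt (G.degree v : ℝ)) *
      Matrix.diagonal (fun v => (G.degree v : ℝ)) *
      Matrix.diagonal (fun v => 1 / Real.sqrt (G.degree v : ℝ)) = 1 := by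
  rw [Matrix.diagonal_mul_diagonal, Matrix.diagonal_mul_diagonal]
  rw [← Matrix.diagonal_one]
  apply congrArg
  funext v
  have hd : (0:ℝ) < (G.degree v : ℝ) := by exact_mod_cast hdeg v
  have hsq : Real.sqrt (G.degree v : ℝ) ≠ 0 := (Real.sqrt_pos.mpr hd).ne'
  have e : 1 / Real.sqrt (G.degree v : ℝ) * (G.degree v : ℝ) * (1 / Real.sqrt (G.degree v : ℝ))
      = (G.degree v : ℝ) / (Real.sqrt (G.degree v : ℝ) * Real.sqrt (G.degree v : ℝ)) := by
    field_simp
  rw [e, Real.mul_self_sqrt hd.le, div_self hd.ne']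

lemma nLap_eq_one_sub (hdeg : ∀ v, 0 < G.degree v) :
    nLap G = 1 - Matrix.diagonal (fun v => 1 / Real.sqrt (G.degree v : ℝ)) *
      G.adjMatrix ℝ * Matrix.diagonal (fun v => 1 / Real.sqrt (G.degree v : ℝ)) := by
  rw [nLap, Matrix.mul_sub, Matrix.sub_mul, ← NDN_eq_one G hdeg]

lemma two_sub_nLap (hdeg : ∀ v, 0 < G.degree v) :
    (2:ℝ) • (1 : Matrix V V ℝ) - nLap G =
      Matrix.diagonal (fun v => 1 / Real.sqrt (G.degree v : ℝ)) *
        (G.degMatrix ℝ + G.adjMatrix ℝ) *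
        Matrix.diagonal (fun v => 1 / Real.sqrt (G.degree v : ℝ)) := by
  rw [nLap_eq_one_sub G hdeg, Matrix.mul_add, Matrix.add_mul]
  rw [show (G.degMatrix ℝ) = Matrix.diagonal (fun v => (G.degree v : ℝ)) from rfl]
  rw [show Matrix.diagonal (fun v => 1 / Real.sqrt (G.degree v : ℝ)) *
      Matrix.diagonal (fun v => (G.degree v : ℝ)) *
      Matrix.diagonal (fun v => 1 / Real.sqrt (G.degree v : ℝ)) = 1 from NDN_eq_one G hdeg]
  rw [two_smul]
  abel

lemma trace_nLap (hdeg : ∀ v, 0 < G.degree v) : (nLap G).trace = (Fintype.card V : ℝ) := by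
  rw [nLap_eq_one_sub G hdeg, Matrix.trace_sub, Matrix.trace_one]
  have : (Matrix.diagonal (fun v => 1 / Real.sqrt (G.degree v : ℝ)) *
      G.adjMatrix ℝ * Matrix.diagonal (fun v => 1 / Real.sqrt (G.degree v : ℝ))).trace = 0 := by
    rw [Matrix.trace]
    apply Finset.sum_eq_zero
    intro v _
    rw [Matrix.diag_apply, Matrix.mul_diagonal, Matrix.diagonal_mul]
    simp
  rw [this, sub_zero]
end


lemma my_psd_smul {A : Matrix m m ℝ} (hA : Matrix.PosSemidef A) {c : ℝ} (hc : 0 ≤ c) :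
    Matrix.PosSemidef (c • A) := by
  refine Matrix.PosSemidef.of_dotProduct_mulVec_nonneg ?_ ?_
  · unfold Matrix.IsHermitian
    rw [Matrix.conjTranspose_smul, star_trivial, hA.1.eq]
  · intro x
    rw [Matrix.smul_mulVec, dotProduct_smul]
    exact mul_nonneg hc (hA.dotProduct_mulVec_nonneg x)

/-- For a connected graph, 0 ≤ H(G) - H₂(G) ≤ (1/2) log 2, where H is the Von
Neumann entropy and H₂ the Rényi-2 entropy of ρ = 𝓛/n. -/
theorem stmt_15 (n : ℕ) (G : SimpleGraph (Fin n)) [DecidableRel G.Adj]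
    (hconn : G.Connected) (hρ : (((n : ℝ)⁻¹) • nLap G).IsHermitian) :
    0 ≤ (-∑ i, hρ.eigenvalues i * Real.log (hρ.eigenvalues i)) -
        (-Real.log (Matrix.trace ((((n : ℝ)⁻¹) • nLap G) * (((n : ℝ)⁻¹) • nLap G)))) ∧
    (-∑ i, hρ.eigenvalues i * Real.log (hρ.eigenvalues i)) -
        (-Real.log (Matrix.trace ((((n : ℝ)⁻¹) • nLap G) * (((n : ℝ)⁻¹) • nLap G)))) ≤
      (1 / 2) * Real.log 2 := by
  have hn : 0 < n := by
    have : Nonempty (Fin n) := hconn.nonempty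
    exact Fin.pos_iff_nonempty.mpr this
  set M : Matrix (Fin n) (Fin n) ℝ := ((n : ℝ)⁻¹) • nLap G with hM
  rcases eq_or_lt_of_le (show 1 ≤ n from hn) with h1 | h2
  · -- n = 1
    have hdeg0 : ∀ v : Fin n, G.degree v = 0 := by
      intro v
      by_contra h
      obtain ⟨w, hw⟩ := (G.degree_pos_iff_exists_adj v).mp (Nat.pos_of_ne_zero fun hh => h hh)
      have hcard : Fintype.card (Fin n) = 1 := by simp [← h1]
      have := Fintype.card_le_one_iff.mp (le_of_eq hcard) v w
      exact G.ne_of_adj hw this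
    have hadj0 : G.adjMatrix ℝ = 0 := by
      ext i j
      by_cases h : G.Adj i j
      · exfalso
        have hcard : Fintype.card (Fin n) = 1 := by simp [← h1]
        exact G.ne_of_adj h (Fintype.card_le_one_iff.mp (le_of_eq hcard) i j)
      · simp [h]
    have hnl : nLap G = 0 := by
      rw [nLap, hadj0]
      have : Matrix.diagonal (fun v => (G.degree v : ℝ)) = 0 := by
        rw [show (0 : Matrix (Fin n) (Fin n) ℝ) = Matrix.diagonal (fun _ => (0:ℝ)) by simp]
        apply congrArg
        funext v
        rw [hdeg0 v]
        norm_num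
      rw [this, sub_zero, Matrix.mul_zero, Matrix.zero_mul]
    have hM0 : M = 0 := by rw [hM, hnl, smul_zero]
    have hpsd : Matrix.PosSemidef M := by rw [hM0]; exact Matrix.PosSemidef.zero
    have hsum0 : ∑ i, hρ.eigenvalues i = 0 := by
      rw [← my_trace_eq_sum_eig hρ, hM0, Matrix.trace_zero]
    have hz : ∀ i, hρ.eigenvalues i = 0 := by
      intro i
      have := (Finset.sum_eq_zero_iff_of_nonneg
        (fun j _ => hpsd.eigenvalues_nonneg j)).mp hsum0
      exact this i (Finset.mem_univ i)
    have hterm : ∑ i, hρ.eigenvalues i * Real.log (hρ.eigenvalues i) = 0 :=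
      Finset.sum_eq_zero fun i _ => by rw [hz i]; simp
    have htr2 : Matrix.trace (M * M) = 0 := by rw [hM0]; simp
    rw [hterm, htr2, Real.log_zero]
    norm_num
    exact Real.log_nonneg one_le_two
  · -- 2 ≤ n
    have hdeg : ∀ v : Fin n, 0 < G.degree v := by
      intro v
      apply degree_pos_of_connected hconn _ v
      simpa using h2
    set f : Fin n → ℝ := fun v => 1 / Real.sqrt (G.degree v : ℝ) with hf
    have hfstar : (Matrix.diagonal f)ᴴ = Matrix.diagonal f := by
      rw [Matrix.diagonal_conjTranspose]
      congr 1
    have hNpos : (0:ℝ) < (n:ℝ) := by exact_mod_cast hn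
    have hlapeq : Matrix.diagonal (fun v => (G.degree v : ℝ)) - G.adjMatrix ℝ
        = G.lapMatrix ℝ := rfl
    have hpsd_nLap : Matrix.PosSemidef (nLap G) := by
      have := (posSemidef_lapMatrix ℝ G).mul_mul_conjTranspose_same (Matrix.diagonal f)
      rw [hfstar] at this
      rw [nLap, hlapeq]
      exact this
    have hpsdM : Matrix.PosSemidef M := my_psd_smul hpsd_nLap (by positivity)
    have hpsd2 : Matrix.PosSemidef ((2/(n:ℝ)) • (1 : Matrix (Fin n) (Fin n) ℝ) - M) := by
      have heq : (2/(n:ℝ)) • (1 : Matrix (Fin n) (Fin n) ℝ) - M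
          = ((n:ℝ)⁻¹) • ((2:ℝ) • (1 : Matrix (Fin n) (Fin n) ℝ) - nLap G) := by
        rw [smul_sub, smul_smul, hM]
        congr 2
        field_simp
      rw [heq, two_sub_nLap G hdeg]
      apply my_psd_smul _ (by positivity)
      have := (posSemidef_signless G).mul_mul_conjTranspose_same (Matrix.diagonal f)
      rwa [hfstar] at this
    have htrM : M.trace = 1 := by
      rw [hM, Matrix.trace_smul, trace_nLap G hdeg]
      simp
      field_simp
    have hsum : ∑ i, hρ.eigenvalues i = 1 := by
      rw [← my_trace_eq_sum_eig hρ, htrM]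
    have h0 : ∀ i, 0 ≤ hρ.eigenvalues i := fun i => hpsdM.eigenvalues_nonneg i
    have hub : ∀ i, hρ.eigenvalues i ≤ 2/(n:ℝ) := fun i => my_eig_le_of_psd hρ _ hpsd2 i
    have hs : Matrix.trace (M * M) = ∑ i, (hρ.eigenvalues i)^2 := my_trace_sq_eq_sum_eig_sq hρ
    obtain ⟨g1, g2⟩ := entropy_bounds hn hρ.eigenvalues h0 hsum hub hs
    constructor
    · linarith
    · linarith
end Aux
end
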